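/- Let V be a Hausdorff real topological vector space, A ⊆ V a closed affine subset, F ⊆ A a closed convex subset, and N ⊆ A a nonempty subset whose closure is compact. Then the robustness R_{F,N} is faithful with respect to F: for every x ∈ A, R_{F,N}(x) = 0 if and only if x ∈ F. -/

import Mathlib

open scoped ENNReal NNReal
open Filter Topology

/-- The robustness `R_{F,N}(x)`: the infimum of those `r ≥ 0` such that
`(1/(1+r)) • (x + r • y) ∈ F` for some `y ∈ N`, with `inf ∅ = ∞`. -/
noncomputable def Rob {V : Type*} [AddCommGroup V] [Module ℝ V]
    (F N : Set V) (x : V) : ℝ≥0∞ :=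
  ⨅ r ∈ {r : ℝ≥0 | ∃ y ∈ N, (1 + (r : ℝ))⁻¹ • (x + (r : ℝ) • y) ∈ F}, (r : ℝ≥0∞)

/-- Faithfulness of the robustness w.r.t. a closed convex free set `F`, when the
noise set `N` has compact closure. -/
theorem rob_faithful {V : Type*} [AddCommGroup V] [Module ℝ V] [TopologicalSpace V]
    [IsTopologicalAddGroup V] [ContinuousSMul ℝ V] [T2Space V]
    (A F N : Set V)
    (hA : ∀ x ∈ A, ∀ y ∈ A, ∀ l : ℝ, l • x + (1 - l) • y ∈ A) (hAc : IsClosed A)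
    (hFA : F ⊆ A) (hF : Convex ℝ F) (hFc : IsClosed F)
    (hNA : N ⊆ A) (hNne : N.Nonempty) (hNcomp : IsCompact (closure N)) :
    ∀ x ∈ A, (Rob F N x = 0 ↔ x ∈ F) := by
  intro x hx
  constructor
  · intro h
    have key : ∀ n : ℕ, ∃ p : ℝ≥0 × V, p.2 ∈ N ∧
        (1 + (p.1 : ℝ))⁻¹ • (x + (p.1 : ℝ) • p.2) ∈ F ∧ (p.1 : ℝ) < 1 / (n + 1) := by
      intro n
      have h0 : (0 : ℝ≥0∞) < ENNReal.ofReal (1 / (n + 1)) := by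
        rw [ENNReal.ofReal_pos]; positivity
      have hlt : Rob F N x < ENNReal.ofReal (1 / (n + 1)) := by rw [h]; exact h0
      rw [Rob] at hlt
      simp only [iInf_lt_iff] at hlt
      obtain ⟨r, ⟨y, hyN, hyF⟩, hrlt⟩ := hlt
      refine ⟨(r, y), hyN, hyF, ?_⟩
      have := (ENNReal.lt_ofReal_iff_toReal_lt (by simp)).mp hrlt
      simpa using this
    choose p hpN hpF hplt using key
    set r : ℕ → ℝ≥0 := fun n => (p n).1 with hr_def
    set y : ℕ → V := fun n => (p n).2 with hy_def
    have hr0 : Tendsto (fun n => ((r n : ℝ))) atTop (𝓝 0) := by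
      refine squeeze_zero (fun n => (r n).coe_nonneg) (fun n => (hplt n).le) ?_
      exact tendsto_one_div_add_atTop_nhds_zero_nat
    -- cluster point of y
    have hmap : Filter.map y atTop ≤ Filter.principal (closure N) :=
      le_principal_iff.mpr (eventually_map.mpr (Eventually.of_forall
        fun n => subset_closure (hpN n)))
    obtain ⟨y₀, -, hcl⟩ := hNcomp.exists_clusterPt hmap
    set L : Filter ℕ := atTop ⊓ Filter.comap y (𝓝 y₀) with hL
    have hmapL : Filter.map y L = Filter.map y atTop ⊓ 𝓝 y₀ := Filter.push_pull y atTop (𝓝 y₀)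
    have hLne : L.NeBot := by
      have : (Filter.map y L).NeBot := by
        rw [hmapL, inf_comm]
        exact hcl
      exact this.of_map
    have hyL : Tendsto y L (𝓝 y₀) := by
      rw [tendsto_iff_comap]
      exact inf_le_right
    have hrL : Tendsto (fun n => ((r n : ℝ))) L (𝓝 0) := hr0.mono_left inf_le_left
    have hfL : Tendsto (fun n => (1 + (r n : ℝ))⁻¹ • (x + (r n : ℝ) • y n)) L
        (𝓝 ((1 + (0:ℝ))⁻¹ • (x + (0:ℝ) • y₀))) := by
      exact ((tendsto_const_nhds.add hrL).inv₀ (by norm_num)).smul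
        (tendsto_const_nhds.add (hrL.smul hyL))
    have hx' : Tendsto (fun n => (1 + (r n : ℝ))⁻¹ • (x + (r n : ℝ) • y n)) L (𝓝 x) := by
      simpa using hfL
    exact hFc.mem_of_tendsto hx' (Filter.Eventually.of_forall fun n => hpF n)
  · intro hxF
    refine le_antisymm ?_ (zero_le (a := _))
    have h0 : (0 : ℝ≥0) ∈ {r : ℝ≥0 | ∃ y ∈ N, (1 + (r : ℝ))⁻¹ • (x + (r : ℝ) • y) ∈ F} := by
      obtain ⟨y, hy⟩ := hNne
      exact ⟨y, hy, by simpa using hxF⟩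
    calc Rob F N x ≤ ((0 : ℝ≥0) : ℝ≥0∞) := biInf_le _ h0
      _ = 0 := by simp
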